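/- Let ρ = (1−ε)|ψ⟩⟨ψ| + ε I/(d_A d_B) be a depolarized pure state, where |ψ⟩ has k-reduction negativity N_k(ψ) (the absolute sum of negative eigenvalues of k ρ^ψ_A ⊗ I − |ψ⟩⟨ψ|). Then the k-reduction negativity of ρ equals (1−ε)N_k(ψ) − ε(d_B k − 1)/(d_A d_B) when ε < ε*, and 0 when ε ≥ ε*, where ε* = d_A d_B N_k(ψ) / (k d_B − 1 + d_A d_B N_k(ψ)). -/

import Mathlib

open Matrix Kronecker ComplexOrder

/-- Partial trace over the second factor. -/
noncomputable def ptraceB (dA dB : ℕ) (ρ : Matrix (Fin dA × Fin dB) (Fin dA × Fin dB) ℂ) :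
    Matrix (Fin dA) (Fin dA) ℂ :=
  fun a a' => ∑ b, ρ (a, b) (a', b)

/-- The k-reduced operator `R_k(σ) = k σ_A ⊗ I_B − σ`. -/
noncomputable def kReduced (dA dB k : ℕ)
    (σ : Matrix (Fin dA × Fin dB) (Fin dA × Fin dB) ℂ) :
    Matrix (Fin dA × Fin dB) (Fin dA × Fin dB) ℂ :=
  (k : ℂ) • (ptraceB dA dB σ ⊗ₖ (1 : Matrix (Fin dB) (Fin dB) ℂ)) - σ

/-- The absolute value of the sum of the negative eigenvalues of a Hermitian matrix. -/
noncomputable def negativity {n : Type*} [Fintype n] [DecidableEq n]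
    {A : Matrix n n ℂ} (hA : A.IsHermitian) : ℝ :=
  -∑ i, min (hA.eigenvalues i) 0

section Aux

variable {n : Type*} [Fintype n] [DecidableEq n]

private lemma herm_det_sub {A : Matrix n n ℂ} (hA : A.IsHermitian) (t : ℝ) :
    (A - (t : ℂ) • 1).det = ∏ i, ((hA.eigenvalues i : ℂ) - t) := by
  have hU := hA.eigenvectorUnitary.2
  rw [Matrix.mem_unitaryGroup_iff] at hU
  have h1 : (t : ℂ) • (1 : Matrix n n ℂ) =
      (hA.eigenvectorUnitary : Matrix n n ℂ) * ((t:ℂ) • 1) * star (hA.eigenvectorUnitary : Matrix n n ℂ) := by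
    rw [Matrix.mul_smul, Matrix.mul_one, Matrix.smul_mul, hU]
  calc (A - (t : ℂ) • 1).det
      = ((hA.eigenvectorUnitary : Matrix n n ℂ) *
          (Matrix.diagonal (RCLike.ofReal ∘ hA.eigenvalues) - (t:ℂ) • 1) *
          star (hA.eigenvectorUnitary : Matrix n n ℂ)).det := by
        conv_lhs => rw [hA.spectral_theorem, Unitary.conjStarAlgAut_apply, h1]
        rw [Matrix.mul_sub, Matrix.sub_mul]
    _ = ∏ i, ((hA.eigenvalues i : ℂ) - t) := by
        rw [Matrix.det_mul, Matrix.det_mul]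
        have : (hA.eigenvectorUnitary : Matrix n n ℂ).det *
            (star (hA.eigenvectorUnitary : Matrix n n ℂ)).det = 1 := by
          rw [← Matrix.det_mul, hU, Matrix.det_one]
        rw [mul_comm, ← mul_assoc, mul_comm ((star (hA.eigenvectorUnitary : Matrix n n ℂ)).det),
          this, one_mul]
        have : Matrix.diagonal (RCLike.ofReal ∘ hA.eigenvalues : n → ℂ) - (t:ℂ) • 1 =
            Matrix.diagonal (fun i => (hA.eigenvalues i : ℂ) - t) := by
          rw [← Matrix.diagonal_one, ← Matrix.diagonal_smul, Matrix.diagonal_sub]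
          simp
        rw [this, Matrix.det_diagonal]

/-- A genuine eigenvalue of a Hermitian matrix appears among `hA.eigenvalues`. -/
private lemma exists_eig_eq {A : Matrix n n ℂ} (hA : A.IsHermitian) {t : ℝ} {v : n → ℂ}
    (hv : v ≠ 0) (h : A *ᵥ v = (t : ℂ) • v) : ∃ i, hA.eigenvalues i = t := by
  have hdet : (A - (t : ℂ) • 1).det = 0 := by
    rw [← Matrix.exists_mulVec_eq_zero_iff]
    exact ⟨v, hv, by rw [Matrix.sub_mulVec, h, Matrix.smul_mulVec, Matrix.one_mulVec, sub_self]⟩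
  rw [herm_det_sub hA t, Finset.prod_eq_zero_iff] at hdet
  obtain ⟨i, -, hi⟩ := hdet
  exact ⟨i, by exact_mod_cast sub_eq_zero.mp hi⟩

private lemma eigvec_dot {A : Matrix n n ℂ} (hA : A.IsHermitian) (i j : n) :
    dotProduct (star ⇑(hA.eigenvectorBasis i)) ⇑(hA.eigenvectorBasis j)
      = if i = j then 1 else 0 := by
  have := orthonormal_iff_ite.mp (hA.eigenvectorBasis.orthonormal) i j
  rw [EuclideanSpace.inner_eq_star_dotProduct, dotProduct_comm] at this
  exact this

private lemma real_smul_pi (r : ℝ) (w : n → ℂ) : r • w = (r : ℂ) • w := by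
  ext k; simp [Complex.real_smul]

private lemma vecMulVec_mulVec' (v w x : n → ℂ) :
    Matrix.vecMulVec v w *ᵥ x = (dotProduct w x) • v := by
  ext k
  simp only [Matrix.vecMulVec, Matrix.mulVec, dotProduct, Pi.smul_apply, smul_eq_mul,
    Matrix.of_apply, Finset.mul_sum]
  rw [Finset.sum_mul]
  exact Finset.sum_congr rfl fun _ _ => by ring

private lemma eigbasis_ne_zero {A : Matrix n n ℂ} (hA : A.IsHermitian) (i : n) :
    (⇑(hA.eigenvectorBasis i) : n → ℂ) ≠ 0 := by
  intro h
  have h1 : ‖hA.eigenvectorBasis i‖ = 1 := hA.eigenvectorBasis.orthonormal.1 i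
  have h0 : (hA.eigenvectorBasis i : EuclideanSpace ℂ n) = 0 := by
    ext k
    exact congrFun h k
  rw [h0, norm_zero] at h1
  norm_num at h1

private lemma mulVec_eigvec_coe {A : Matrix n n ℂ} (hA : A.IsHermitian) (i : n) :
    A *ᵥ ⇑(hA.eigenvectorBasis i) = ((hA.eigenvalues i : ℂ)) • ⇑(hA.eigenvectorBasis i) := by
  rw [hA.mulVec_eigenvectorBasis, real_smul_pi]

private lemma eigvec_exists {A : Matrix n n ℂ} (hA : A.IsHermitian) (i : n) :
    ∃ v : n → ℂ, v ≠ 0 ∧ A *ᵥ v = ((hA.eigenvalues i : ℂ)) • v :=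
  ⟨_, eigbasis_ne_zero hA i, mulVec_eigvec_coe hA i⟩

/-- A PSD matrix minus a nonneg multiple of a rank-one projector has at most one
negative eigenvalue. -/
private lemma atMostOneNeg {M P : Matrix n n ℂ} (hM : M.IsHermitian)
    (hP : ∀ x : n → ℂ, 0 ≤ (dotProduct (star x) (P *ᵥ x)).re)
    (v : n → ℂ) (t : ℝ) (ht : 0 ≤ t)
    (hMP : M = P - (t : ℂ) • Matrix.vecMulVec v (star v)) :
    ∀ i j, hM.eigenvalues i < 0 → hM.eigenvalues j < 0 → i = j := by
  intro i j hi hj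
  by_contra hij
  set ui : n → ℂ := ⇑(hM.eigenvectorBasis i) with hui
  set uj : n → ℂ := ⇑(hM.eigenvectorBasis j) with huj
  set a : ℂ := dotProduct (star v) ui with ha
  set b : ℂ := dotProduct (star v) uj with hb
  obtain ⟨α, β, hne, hcon⟩ : ∃ α β : ℂ, ¬(α = 0 ∧ β = 0) ∧ α * a + β * b = 0 := by
    by_cases h : a = 0 ∧ b = 0
    · exact ⟨1, 0, by simp, by simp [h.1, h.2]⟩
    · refine ⟨b, -a, ?_, by ring⟩
      rintro ⟨hb0, h2⟩
      exact h ⟨neg_eq_zero.mp h2, hb0⟩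
  set x : n → ℂ := α • ui + β • uj with hx
  have h2 : dotProduct (star v) x = 0 := by
    simp [hx, dotProduct_add, dotProduct_smul, smul_eq_mul, ← ha, ← hb, hcon]
  have h1 : M *ᵥ x = (α * hM.eigenvalues i) • ui + (β * hM.eigenvalues j) • uj := by
    simp only [hx, Matrix.mulVec_add, Matrix.mulVec_smul, hui, huj,
      mulVec_eigvec_coe]
    module
  have h3 : (dotProduct (star x) (M *ᵥ x)).re
      = Complex.normSq α * hM.eigenvalues i + Complex.normSq β * hM.eigenvalues j := by
    rw [h1]
    simp only [hx, star_add, star_smul, add_dotProduct, smul_dotProduct,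
      dotProduct_add, dotProduct_smul, smul_eq_mul, ← hui, ← huj]
    rw [eigvec_dot hM i i, eigvec_dot hM j j, eigvec_dot hM i j, eigvec_dot hM j i]
    simp only [hij, Ne.symm hij, if_true, if_false, if_neg hij, if_neg (Ne.symm hij), if_pos rfl,
      mul_zero, mul_one, add_zero, zero_add]
    have e1 : α * ((hM.eigenvalues i : ℂ)) * star α + β * ((hM.eigenvalues j : ℂ)) * star β
        = ((Complex.normSq α * hM.eigenvalues i + Complex.normSq β * hM.eigenvalues j : ℝ) : ℂ) := by
      push_cast
      rw [Complex.normSq_eq_conj_mul_self, Complex.normSq_eq_conj_mul_self]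
      simp only [RCLike.star_def]
      ring
    rw [e1, Complex.ofReal_re]
  have h4 : (dotProduct (star x) (M *ᵥ x)).re < 0 := by
    rw [h3]
    rcases Classical.em (α = 0) with h | h
    · have hβ : β ≠ 0 := fun hβ => hne ⟨h, hβ⟩
      have : 0 < Complex.normSq β := Complex.normSq_pos.mpr hβ
      nlinarith [Complex.normSq_nonneg α]
    · have : 0 < Complex.normSq α := Complex.normSq_pos.mpr h
      nlinarith [Complex.normSq_nonneg β]
  have h5 : M *ᵥ x = P *ᵥ x := by
    rw [hMP, Matrix.sub_mulVec, Matrix.smul_mulVec, vecMulVec_mulVec', h2]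
    simp
  rw [h5] at h4
  exact absurd (hP x) (by linarith)

private lemma sum_min_eq [Nonempty n] (f : n → ℝ)
    (h1 : ∀ i j, f i < 0 → f j < 0 → i = j) :
    ∑ i, min (f i) 0 = min (Finset.univ.inf' Finset.univ_nonempty f) 0 := by
  obtain ⟨i0, -, hi0⟩ := Finset.exists_mem_eq_inf' Finset.univ_nonempty f
  rw [hi0]
  by_cases h : f i0 < 0
  · rw [min_eq_left h.le]
    rw [Finset.sum_eq_single i0]
    · exact min_eq_left h.le
    · intro j _ hj
      rcases lt_or_ge (f j) 0 with hj0 | hj0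
      · exact absurd (h1 j i0 hj0 h) hj
      · exact min_eq_right hj0
    · exact fun h => absurd (Finset.mem_univ i0) h
  · push_neg at h
    rw [min_eq_right h]
    apply Finset.sum_eq_zero
    intro j _
    refine min_eq_right ?_
    have := hi0 ▸ Finset.inf'_le f (Finset.mem_univ j)
    linarith

private lemma minEig_affine [Nonempty n] {A B : Matrix n n ℂ} (hA : A.IsHermitian)
    (hB : B.IsHermitian) {a c : ℝ} (ha : 0 ≤ a)
    (hAB : A = ((a : ℝ) : ℂ) • B + ((c : ℝ) : ℂ) • 1) :
    Finset.univ.inf' Finset.univ_nonempty hA.eigenvalues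
      = a * Finset.univ.inf' Finset.univ_nonempty hB.eigenvalues + c := by
  rcases eq_or_lt_of_le ha with rfl | hapos
  · have key : ∀ (μ : ℝ) (v : n → ℂ), v ≠ 0 → A *ᵥ v = (μ : ℂ) • v → μ = c := by
      intro μ v hv h1
      rw [hAB] at h1
      rw [Matrix.add_mulVec, Matrix.smul_mulVec, Matrix.smul_mulVec,
        Matrix.one_mulVec] at h1
      simp only [Complex.ofReal_zero, zero_smul, zero_add] at h1
      obtain ⟨k, hk⟩ := Function.ne_iff.mp hv
      have h2 := congrFun h1 k
      simp only [Pi.smul_apply, smul_eq_mul] at h2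
      have : (c : ℂ) = (μ : ℂ) := mul_right_cancel₀ hk h2
      exact_mod_cast this.symm
    have hall : ∀ i, hA.eigenvalues i = c := by
      intro i
      obtain ⟨v, hv, h1⟩ := eigvec_exists hA i
      exact key _ v hv h1
    obtain ⟨i0, -, hi0⟩ := Finset.exists_mem_eq_inf' (Finset.univ_nonempty (α := n)) hA.eigenvalues
    rw [hi0, hall i0, zero_mul, zero_add]
  · apply le_antisymm
    · obtain ⟨j0, -, hj0⟩ := Finset.exists_mem_eq_inf' (Finset.univ_nonempty (α := n)) hB.eigenvalues
      obtain ⟨v, hv, h1⟩ := eigvec_exists hB j0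
      have h2 : A *ᵥ v = (((a * hB.eigenvalues j0 + c : ℝ)) : ℂ) • v := by
        rw [hAB, Matrix.add_mulVec, Matrix.smul_mulVec, Matrix.smul_mulVec,
          Matrix.one_mulVec, h1]
        push_cast
        module
      obtain ⟨i, hi⟩ := exists_eig_eq hA hv h2
      calc Finset.univ.inf' Finset.univ_nonempty hA.eigenvalues ≤ hA.eigenvalues i :=
            Finset.inf'_le _ (Finset.mem_univ i)
        _ = a * Finset.univ.inf' Finset.univ_nonempty hB.eigenvalues + c := by rw [hi, hj0]
    · obtain ⟨i0, -, hi0⟩ := Finset.exists_mem_eq_inf' (Finset.univ_nonempty (α := n)) hA.eigenvalues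
      have ha' : (a : ℂ) ≠ 0 := by exact_mod_cast hapos.ne'
      have key : ∀ (μ : ℝ) (v : n → ℂ), A *ᵥ v = (μ : ℂ) • v →
          B *ᵥ v = (((μ - c) / a : ℝ) : ℂ) • v := by
        intro μ v h1
        rw [hAB] at h1
        rw [Matrix.add_mulVec, Matrix.smul_mulVec, Matrix.smul_mulVec,
          Matrix.one_mulVec] at h1
        have h3 : (a : ℂ) • (B *ᵥ v) = ((μ : ℂ) - c) • v := by
          have := congrArg (fun w => w - (c : ℂ) • v) h1
          simp only [add_sub_cancel_right] at this
          rw [this]; module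
        have h4 := congrArg (fun w => (a : ℂ)⁻¹ • w) h3
        simp only [inv_smul_smul₀ ha'] at h4
        rw [h4, smul_smul]
        congr 1
        push_cast
        field_simp
      obtain ⟨v, hv, h1⟩ := eigvec_exists hA i0
      have h2 := key _ v h1
      obtain ⟨j, hj⟩ := exists_eig_eq hB hv h2
      have hle : Finset.univ.inf' Finset.univ_nonempty hB.eigenvalues ≤ hB.eigenvalues j :=
        Finset.inf'_le _ (Finset.mem_univ j)
      have heq : hA.eigenvalues i0 = a * hB.eigenvalues j + c := by
        rw [hj]; field_simp; ring
      rw [hi0, heq]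
      have := mul_le_mul_of_nonneg_left hle ha
      linarith

private lemma final_arith (lm ε Dr K : ℝ) (hD : 0 < Dr) (hK : 0 ≤ K)
    (hε0 : 0 ≤ ε) (hε1 : ε ≤ 1) :
    -min ((1 - ε) * lm + ε * K / Dr) 0 =
      if ε < Dr * -min lm 0 / (K + Dr * -min lm 0) then
        (1 - ε) * -min lm 0 - ε * K / Dr
      else 0 := by
  rcases lt_or_ge lm 0 with h | h
  · rw [min_eq_left h.le]
    set N : ℝ := -lm with hN
    have hNpos : 0 < N := by simp [hN]; linarith
    have hlm : lm = -N := by simp [hN]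
    have hden : 0 < K + Dr * N := by positivity
    by_cases hc : ε < Dr * N / (K + Dr * N)
    · rw [if_pos hc]
      have h2 : ε * (K + Dr * N) < Dr * N := (lt_div_iff₀ hden).mp hc
      have h4 : ε * K / Dr < (1 - ε) * N := by
        rw [div_lt_iff₀ hD]; nlinarith
      have h3 : (1 - ε) * lm + ε * K / Dr < 0 := by
        rw [hlm]; linarith
      rw [min_eq_left h3.le, hlm]; ring
    · rw [if_neg hc]
      push_neg at hc
      have h2 : Dr * N ≤ ε * (K + Dr * N) := (div_le_iff₀ hden).mp hc
      have h4 : (1 - ε) * N ≤ ε * K / Dr := by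
        rw [le_div_iff₀ hD]; nlinarith
      have h3 : 0 ≤ (1 - ε) * lm + ε * K / Dr := by
        rw [hlm]; linarith
      rw [min_eq_right h3, neg_zero]
  · rw [min_eq_right h, neg_zero, mul_zero, zero_div]
    rw [if_neg (by linarith)]
    have h1 : 0 ≤ (1 - ε) * lm + ε * K / Dr := by
      have := mul_nonneg (sub_nonneg.mpr hε1) h
      have := div_nonneg (mul_nonneg hε0 hK) hD.le
      linarith
    rw [min_eq_right h1, neg_zero]

end Aux

set_option maxHeartbeats 1000000 in
theorem stmt10 (dA dB k : ℕ) (hk : 0 < k) (hdA : 0 < dA) (hdB : 0 < dB)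
    (ε : ℝ) (hε0 : 0 ≤ ε) (hε1 : ε ≤ 1)
    (ψ : Fin dA × Fin dB → ℂ) (hnorm : ∑ p, ‖ψ p‖ ^ 2 = 1)
    (ρ : Matrix (Fin dA × Fin dB) (Fin dA × Fin dB) ℂ)
    (hρ : ρ = ((1 - ε : ℝ) : ℂ) • Matrix.vecMulVec ψ (star ψ)
      + ((ε / (dA * dB) : ℝ) : ℂ) • (1 : Matrix (Fin dA × Fin dB) (Fin dA × Fin dB) ℂ))
    (hRψ : (kReduced dA dB k (Matrix.vecMulVec ψ (star ψ))).IsHermitian)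
    (hRρ : (kReduced dA dB k ρ).IsHermitian) :
    negativity hRρ =
      if ε < (dA * dB * negativity hRψ) / (k * dB - 1 + dA * dB * negativity hRψ) then
        (1 - ε) * negativity hRψ - ε * (dB * k - 1) / (dA * dB)
      else 0 := by
  classical
  haveI : Nonempty (Fin dA × Fin dB) := ⟨(⟨0, hdA⟩, ⟨0, hdB⟩)⟩
  have hDc : ((dA : ℂ) * dB) ≠ 0 :=
    mul_ne_zero (Nat.cast_ne_zero.mpr hdA.ne') (Nat.cast_ne_zero.mpr hdB.ne')
  have hDr : (0 : ℝ) < (dA : ℝ) * dB := by positivity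
  have hkdB : (1 : ℝ) ≤ (k : ℝ) * dB := by
    have : (1 : ℕ) ≤ k * dB := Nat.mul_pos hk hdB
    exact_mod_cast this
  have hK : (0 : ℝ) ≤ (k : ℝ) * dB - 1 := by linarith
  set Ψ : Matrix (Fin dA × Fin dB) (Fin dA × Fin dB) ℂ := Matrix.vecMulVec ψ (star ψ) with hΨ
  -- partial trace of the identity
  have hpt1 : ptraceB dA dB (1 : Matrix (Fin dA × Fin dB) (Fin dA × Fin dB) ℂ)
      = (dB : ℂ) • 1 := by
    ext a a'
    simp only [ptraceB, Matrix.one_apply, Prod.mk.injEq, Matrix.smul_apply, smul_eq_mul]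
    by_cases h : a = a'
    · simp [h]
    · simp [h]
  have hlin : ∀ (X Y : Matrix (Fin dA × Fin dB) (Fin dA × Fin dB) ℂ) (s t : ℂ),
      ptraceB dA dB (s • X + t • Y) = s • ptraceB dA dB X + t • ptraceB dA dB Y := by
    intro X Y s t
    ext a a'
    simp [ptraceB, Finset.sum_add_distrib, Finset.mul_sum]
  have hptρ : ptraceB dA dB ρ = ((1 - ε : ℝ) : ℂ) • ptraceB dA dB Ψ
      + (((ε / (dA * dB) : ℝ) : ℂ) * dB) • 1 := by
    rw [hρ, hlin, hpt1, smul_smul]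
  -- the key linear identity
  have hkr : kReduced dA dB k ρ = ((1 - ε : ℝ) : ℂ) • kReduced dA dB k Ψ
      + ((ε * ((k : ℝ) * dB - 1) / (dA * dB) : ℝ) : ℂ) • 1 := by
    rw [kReduced, kReduced, hptρ, hρ, Matrix.add_kronecker, Matrix.smul_kronecker,
      Matrix.smul_kronecker, Matrix.one_kronecker_one]
    match_scalars <;> (push_cast; first | ring | (field_simp; ring))
  -- positive semidefinite parts
  set Bm : Matrix (Fin dA) (Fin dB) ℂ := Matrix.of (fun a b => ψ (a, b)) with hBm
  have hBB : ptraceB dA dB Ψ = Bm * Bmᴴ := by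
    ext a a'
    simp [ptraceB, hΨ, Matrix.vecMulVec_apply, Matrix.mul_apply, Matrix.conjTranspose_apply, hBm]
  have hctk : (Bm ⊗ₖ (1 : Matrix (Fin dB) (Fin dB) ℂ))ᴴ = Bmᴴ ⊗ₖ 1 := by
    ext ⟨i, j⟩ ⟨i', j'⟩
    simp only [Matrix.conjTranspose_apply, Matrix.kroneckerMap_apply, Matrix.one_apply,
      star_mul']
    by_cases h : j = j' <;> simp [h, eq_comm, Matrix.conjTranspose_apply]
  have hkronPSD : ((ptraceB dA dB Ψ) ⊗ₖ (1 : Matrix (Fin dB) (Fin dB) ℂ)).PosSemidef := by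
    rw [hBB]
    have : (Bm * Bmᴴ) ⊗ₖ (1 : Matrix (Fin dB) (Fin dB) ℂ)
        = (Bm ⊗ₖ (1 : Matrix (Fin dB) (Fin dB) ℂ)) * (Bm ⊗ₖ (1 : Matrix (Fin dB) (Fin dB) ℂ))ᴴ := by
      rw [hctk, show (1 : Matrix (Fin dB) (Fin dB) ℂ) = 1 * 1 from (Matrix.one_mul 1).symm,
        Matrix.mul_kronecker_mul]
      rw [Matrix.one_mul]
    rw [this]
    exact Matrix.posSemidef_self_mul_conjTranspose _
  -- quadratic forms
  have hre : ∀ (z : ℂ), 0 ≤ z → 0 ≤ z.re := fun z hz => by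
    rw [Complex.le_def] at hz; exact hz.1.trans_eq rfl |>.trans_eq rfl
  have hqψ : ∀ x : Fin dA × Fin dB → ℂ,
      0 ≤ (dotProduct (star x) (((k : ℂ) • ((ptraceB dA dB Ψ) ⊗ₖ (1 : Matrix (Fin dB) (Fin dB) ℂ))) *ᵥ x)).re := by
    intro x
    rw [Matrix.smul_mulVec, dotProduct_smul, smul_eq_mul]
    have h1 : (((k : ℂ)) * (dotProduct (star x) (((ptraceB dA dB Ψ) ⊗ₖ (1 : Matrix (Fin dB) (Fin dB) ℂ)) *ᵥ x))).re
        = (k : ℝ) * (dotProduct (star x) (((ptraceB dA dB Ψ) ⊗ₖ (1 : Matrix (Fin dB) (Fin dB) ℂ)) *ᵥ x)).re := by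
      simp [Complex.mul_re]
    rw [h1]
    exact mul_nonneg (by positivity) (hre _ (hkronPSD.dotProduct_mulVec_nonneg x))
  have hqone : ∀ x : Fin dA × Fin dB → ℂ, 0 ≤ (dotProduct (star x) x).re :=
    fun x => hre _ (dotProduct_star_self_nonneg x)
  -- at most one negative eigenvalue for Rψ
  have huniqψ : ∀ i j, hRψ.eigenvalues i < 0 → hRψ.eigenvalues j < 0 → i = j := by
    apply atMostOneNeg hRψ hqψ ψ 1 zero_le_one
    rw [kReduced]
    push_cast
    rw [one_smul]
  -- Rρ = Pρ - (1-ε) • Ψ  with Pρ PSD-quadratic-form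
  set c' : ℝ := ε * ((k : ℝ) * dB - 1) / (dA * dB) with hc'
  have hc'0 : 0 ≤ c' := by
    apply div_nonneg (mul_nonneg hε0 hK) hDr.le
  set Pρ : Matrix (Fin dA × Fin dB) (Fin dA × Fin dB) ℂ :=
    ((1 - ε : ℝ) : ℂ) • ((k : ℂ) • ((ptraceB dA dB Ψ) ⊗ₖ (1 : Matrix (Fin dB) (Fin dB) ℂ)))
      + ((c' : ℝ) : ℂ) • 1 with hPρ
  have hqρ : ∀ x : Fin dA × Fin dB → ℂ,
      0 ≤ (dotProduct (star x) (Pρ *ᵥ x)).re := by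
    intro x
    have q1 := hre _ (hkronPSD.dotProduct_mulVec_nonneg x)
    have q2 := hqone x
    have h2 : (0:ℝ) ≤ 1 - ε := by linarith
    simp only [hPρ, Matrix.add_mulVec, Matrix.smul_mulVec, dotProduct_add,
      dotProduct_smul, Matrix.one_mulVec, smul_eq_mul, Complex.add_re, Complex.mul_re,
      Complex.ofReal_re, Complex.ofReal_im, Complex.natCast_re, Complex.natCast_im]
    have hk0 : (0:ℝ) ≤ (k:ℝ) := Nat.cast_nonneg k
    nlinarith [mul_nonneg (mul_nonneg h2 hk0) q1, mul_nonneg hc'0 q2]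
  have hMPρ : kReduced dA dB k ρ = Pρ - ((1 - ε : ℝ) : ℂ) • Matrix.vecMulVec ψ (star ψ) := by
    rw [hkr, hPρ]
    have hΨeq : kReduced dA dB k Ψ
        = (k : ℂ) • ((ptraceB dA dB Ψ) ⊗ₖ (1 : Matrix (Fin dB) (Fin dB) ℂ)) - Ψ := rfl
    rw [hΨeq, hΨ]
    module
  have huniqρ : ∀ i j, hRρ.eigenvalues i < 0 → hRρ.eigenvalues j < 0 → i = j :=
    atMostOneNeg hRρ hqρ ψ (1 - ε) (by linarith) hMPρ
  -- min eigenvalues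
  set lm : ℝ := Finset.univ.inf' Finset.univ_nonempty hRψ.eigenvalues with hlm
  have hmm : Finset.univ.inf' Finset.univ_nonempty hRρ.eigenvalues = (1 - ε) * lm + c' :=
    minEig_affine hRρ hRψ (a := 1 - ε) (c := c') (by linarith) hkr
  have e2 : negativity hRψ = -min lm 0 := by
    rw [negativity, sum_min_eq _ huniqψ, hlm]
  have e1 : negativity hRρ = -min ((1 - ε) * lm + ε * ((k : ℝ) * dB - 1) / ((dA : ℝ) * dB)) 0 := by
    rw [negativity, sum_min_eq _ huniqρ, hmm, hc']
  rw [e1, e2]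
  rw [show ((dB : ℝ) * k - 1) = ((k : ℝ) * dB - 1) from by ring]
  exact final_arith lm ε ((dA : ℝ) * dB) ((k : ℝ) * dB - 1) hDr hK hε0 hε1
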